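/- Let $f : \mathbb{R}^d \to \mathbb{R}^d$ satisfy $\langle f(x), x \rangle \le a - b\|x\|^2$ for all $x$, with $a \ge 0$ and $b > 0$. Let weights $\{\omega_j\}$ satisfy $\omega_0 > 0$, $\omega_j \le 0$ for $j \ge 1$, and $\sum_{j=0}^n \omega_j \ge 0$ for all $n \ge 1$. If $(x_n)$ satisfies $\sum_{j=0}^{n} \omega_{n-j} x_j = h^{\alpha} f(x_n)$ for $n \ge 1$ with $h^\alpha > 0$, then $(\omega_0 + 2bh^{\alpha})\|x_n\|^2 \le 2h^{\alpha} a + \sum_{j=0}^{n-1} |\omega_{n-j}|\,\|x_j\|^2$ for all $n \ge 1$. -/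

import Mathlib

theorem fbdf_dissipativity_recursion {d : ℕ}
    (f : EuclideanSpace ℝ (Fin d) → EuclideanSpace ℝ (Fin d)) (a b : ℝ)
    (ha : 0 ≤ a) (hb : 0 < b)
    (hf : ∀ x, (inner ℝ (f x) x : ℝ) ≤ a - b * ‖x‖ ^ 2)
    (ω : ℕ → ℝ) (hω0 : 0 < ω 0) (hωneg : ∀ j, 1 ≤ j → ω j ≤ 0)
    (hsum : ∀ n : ℕ, 1 ≤ n → 0 ≤ ∑ j ∈ Finset.range (n + 1), ω j)
    (hα : ℝ) (hhα : 0 < hα)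
    (x : ℕ → EuclideanSpace ℝ (Fin d))
    (hx : ∀ n : ℕ, 1 ≤ n → ∑ j ∈ Finset.range (n + 1), ω (n - j) • x j = hα • f (x n)) :
    ∀ n : ℕ, 1 ≤ n →
      (ω 0 + 2 * b * hα) * ‖x n‖ ^ 2
        ≤ 2 * hα * a + ∑ j ∈ Finset.range n, |ω (n - j)| * ‖x j‖ ^ 2 := by
  intro n hn
  have hkey := congrArg (fun y => (inner ℝ y (x n) : ℝ)) (hx n hn)
  simp only [sum_inner, real_inner_smul_left] at hkey
  rw [Finset.sum_range_succ] at hkey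
  have hnn : n - n = 0 := by omega
  rw [hnn, real_inner_self_eq_norm_sq] at hkey
  -- hkey : ∑ j in range n, ω (n-j) * ⟪x j, x n⟫ + ω 0 * ‖x n‖^2 = hα * ⟪f (x n), x n⟫
  have hI : (inner ℝ (f (x n)) (x n) : ℝ) ≤ a - b * ‖x n‖ ^ 2 := hf (x n)
  -- bound each cross term
  have hT : ∀ j ∈ Finset.range n,
      ω (n - j) * ((‖x j‖ ^ 2 + ‖x n‖ ^ 2) / 2) ≤ ω (n - j) * (inner ℝ (x j) (x n) : ℝ) := by
    intro j hj
    have hj' : j < n := Finset.mem_range.mp hj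
    have hωj : ω (n - j) ≤ 0 := hωneg _ (by omega)
    have h1 : (inner ℝ (x j) (x n) : ℝ) ≤ (‖x j‖ ^ 2 + ‖x n‖ ^ 2) / 2 := by
      have := real_inner_le_norm (x j) (x n)
      nlinarith [sq_nonneg (‖x j‖ - ‖x n‖)]
    exact mul_le_mul_of_nonpos_left h1 hωj
  have hTsum : ∑ j ∈ Finset.range n, ω (n - j) * ((‖x j‖ ^ 2 + ‖x n‖ ^ 2) / 2)
      ≤ ∑ j ∈ Finset.range n, ω (n - j) * (inner ℝ (x j) (x n) : ℝ) :=
    Finset.sum_le_sum hT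
  have hsplit : ∑ j ∈ Finset.range n, ω (n - j) * ((‖x j‖ ^ 2 + ‖x n‖ ^ 2) / 2)
      = (∑ j ∈ Finset.range n, ω (n - j) * ‖x j‖ ^ 2) / 2
        + (∑ j ∈ Finset.range n, ω (n - j)) * ‖x n‖ ^ 2 / 2 := by
    rw [Finset.sum_mul, Finset.sum_div, Finset.sum_div, ← Finset.sum_add_distrib]
    exact Finset.sum_congr rfl fun j _ => by ring
  -- bound the sum of weights
  have hS' : -ω 0 ≤ ∑ j ∈ Finset.range n, ω (n - j) := by
    have h1 : ∑ j ∈ Finset.range n, ω (n - j) = ∑ j ∈ Finset.range n, ω (j + 1) := by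
      rw [← Finset.sum_range_reflect (fun j => ω (j + 1)) n]
      refine Finset.sum_congr rfl fun j hj => ?_
      have hj' : j < n := Finset.mem_range.mp hj
      congr 1; omega
    have h2 : ∑ j ∈ Finset.range (n + 1), ω j
        = (∑ j ∈ Finset.range n, ω (j + 1)) + ω 0 := Finset.sum_range_succ' ω n
    have h3 := hsum n hn
    linarith [h1 ▸ (by linarith [h2 ▸ h3] : -ω 0 ≤ ∑ j ∈ Finset.range n, ω (j + 1))]
  -- rewrite abs in goal
  have habs : ∑ j ∈ Finset.range n, |ω (n - j)| * ‖x j‖ ^ 2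
      = -∑ j ∈ Finset.range n, ω (n - j) * ‖x j‖ ^ 2 := by
    rw [← Finset.sum_neg_distrib]
    refine Finset.sum_congr rfl fun j hj => ?_
    have hj' : j < n := Finset.mem_range.mp hj
    rw [abs_of_nonpos (hωneg _ (by omega))]; ring
  rw [habs]
  have hN : (0:ℝ) ≤ ‖x n‖ ^ 2 := sq_nonneg _
  set N := ‖x n‖ ^ 2
  set A := ∑ j ∈ Finset.range n, ω (n - j) * ‖x j‖ ^ 2
  set S := ∑ j ∈ Finset.range n, ω (n - j)
  rw [hsplit] at hTsum
  nlinarith [mul_le_mul_of_nonneg_right hS' hN]
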